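/- Under hypothesis (G) on g with h = b/K: the map G : C¹([-h,0],I) × C¹([0,h],J) → C¹([0,h],ℝ) defined by G(ψ,y)(t) = y(t) + ∫_0^t g(y(s),ψ(−s)) ds is continuously Fréchet differentiable, with partial derivatives ∂₁G(ψ,y)χ(t) = ∫_0^t ∂₂g(y(s),ψ(−s)) χ(−s) ds and ∂₂G(ψ,y)u(t) = u(t) + ∫_0^t ∂₁g(y(s),ψ(−s)) u(s) ds. -/

import Mathlib

open Set

noncomputable def supN {X : Type*} [NormedAddCommGroup X] (a b : ℝ) (f : ℝ → X) : ℝ :=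
  ⨆ t : Set.Icc a b, ‖f t.1‖

def C1on {X : Type*} [NormedAddCommGroup X] [NormedSpace ℝ X] (a b : ℝ) (f : ℝ → X) : Prop :=
  ContinuousOn f (Set.Icc a b) ∧ (∀ t ∈ Set.Icc a b, DifferentiableWithinAt ℝ f (Set.Icc a b) t) ∧
    ContinuousOn (derivWithin f (Set.Icc a b)) (Set.Icc a b)

noncomputable def nC1 {X : Type*} [NormedAddCommGroup X] [NormedSpace ℝ X] (a b : ℝ) (f : ℝ → X) : ℝ :=
  supN a b f + supN a b (derivWithin f (Set.Icc a b))

/-- Partial derivative in the first argument. -/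
noncomputable def p1 (k : ℝ → ℝ → ℝ) (x y : ℝ) : ℝ := deriv (fun x' => k x' y) x

/-- Partial derivative in the second argument. -/
noncomputable def p2 (k : ℝ → ℝ → ℝ) (x y : ℝ) : ℝ := deriv (fun y' => k x y') y

/-- G(ψ,y)(t) = y(t) + ∫₀ᵗ g(y(s),ψ(-s)) ds. -/
noncomputable def Gmap (g : ℝ → ℝ → ℝ) (ψ y : ℝ → ℝ) : ℝ → ℝ :=
  fun t => y t + ∫ s in (0:ℝ)..t, g (y s) (ψ (-s))

/-- ∂₁G(ψ,y)χ(t) = ∫₀ᵗ ∂₂g(y(s),ψ(-s)) χ(-s) ds. -/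
noncomputable def D1G (g : ℝ → ℝ → ℝ) (ψ y χ : ℝ → ℝ) : ℝ → ℝ :=
  fun t => ∫ s in (0:ℝ)..t, p2 g (y s) (ψ (-s)) * χ (-s)

/-- ∂₂G(ψ,y)u(t) = u(t) + ∫₀ᵗ ∂₁g(y(s),ψ(-s)) u(s) ds. -/
noncomputable def D2G (g : ℝ → ℝ → ℝ) (ψ y u : ℝ → ℝ) : ℝ → ℝ :=
  fun t => u t + ∫ s in (0:ℝ)..t, p1 g (y s) (ψ (-s)) * u s

/-- Membership in C¹([-h,0],I) × C¹([0,h],J). -/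
def DomG (J I : Set ℝ) (h : ℝ) (ψ y : ℝ → ℝ) : Prop :=
  C1on (-h) 0 ψ ∧ (∀ u ∈ Set.Icc (-h) 0, ψ u ∈ I) ∧
  C1on 0 h y ∧ (∀ u ∈ Set.Icc (0:ℝ) h, y u ∈ J)

section Helpers
open MeasureTheory intervalIntegral
lemma supN_le {a b : ℝ} {f : ℝ → ℝ} {C : ℝ} (hC : 0 ≤ C)
    (h : ∀ t ∈ Set.Icc a b, |f t| ≤ C) : supN a b f ≤ C :=
  Real.iSup_le (fun t => by simpa using h t.1 t.2) hC

lemma le_supN {a b : ℝ} {f : ℝ → ℝ} (hf : ContinuousOn f (Set.Icc a b)) {t : ℝ}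
    (ht : t ∈ Set.Icc a b) : |f t| ≤ supN a b f := by
  obtain ⟨C, hC⟩ := isCompact_Icc.exists_bound_of_continuousOn hf
  exact le_ciSup (f := fun t : Set.Icc a b => ‖f t.1‖)
    ⟨C, by rintro x ⟨⟨s, hs⟩, rfl⟩; exact hC s hs⟩ ⟨t, ht⟩

lemma supN_nonneg {a b : ℝ} {f : ℝ → ℝ} : 0 ≤ supN a b f :=
  Real.iSup_nonneg fun _ => norm_nonneg _

lemma abs_le_nC1 {a b : ℝ} {f : ℝ → ℝ} (hf : C1on a b f) {t : ℝ}
    (ht : t ∈ Set.Icc a b) : |f t| ≤ nC1 a b f :=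
  le_trans (le_supN hf.1 ht) (le_add_of_nonneg_right supN_nonneg)

lemma nC1_nonneg {a b : ℝ} {f : ℝ → ℝ} : 0 ≤ nC1 a b f :=
  add_nonneg supN_nonneg supN_nonneg

lemma nC1_congr {a b : ℝ} {f g : ℝ → ℝ} (h : ∀ t ∈ Set.Icc a b, f t = g t) :
    nC1 a b f = nC1 a b g := by
  unfold nC1 supN
  congr 1
  · exact iSup_congr fun t => by rw [h t.1 t.2]
  · exact iSup_congr fun t => by rw [derivWithin_congr (fun s hs => h s hs) (h t.1 t.2)]

lemma C1on.sub {a b : ℝ} (hab : a < b) {f g : ℝ → ℝ} (hf : C1on a b f) (hg : C1on a b g) :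
    C1on a b (f - g) := by
  refine ⟨hf.1.sub hg.1, fun t ht => (hf.2.1 t ht).sub (hg.2.1 t ht), ?_⟩
  have : ∀ t ∈ Set.Icc a b, derivWithin (f - g) (Set.Icc a b) t
      = derivWithin f (Set.Icc a b) t - derivWithin g (Set.Icc a b) t := fun t ht =>
    derivWithin_sub (hf.2.1 t ht) (hg.2.1 t ht)
  exact (hf.2.2.sub hg.2.2).congr fun t ht => this t ht

lemma nC1_integral_le {h C : ℝ} (hh : 0 < h) {φ : ℝ → ℝ}
    (hφ : ContinuousOn φ (Set.Icc 0 h))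
    (hC : ∀ s ∈ Set.Icc 0 h, |φ s| ≤ C) :
    nC1 0 h (fun t => ∫ s in (0:ℝ)..t, φ s) ≤ (h + 1) * C := by
  have hC0 : 0 ≤ C := le_trans (abs_nonneg _) (hC 0 ⟨le_refl 0, hh.le⟩)
  have hInt : ∀ t ∈ Set.Icc (0:ℝ) h, IntervalIntegrable φ volume 0 t := fun t ht =>
    (hφ.mono (by rw [Set.uIcc_of_le ht.1]; exact Set.Icc_subset_Icc le_rfl ht.2)).intervalIntegrable
  have hderiv : ∀ t ∈ Set.Icc (0:ℝ) h,
      derivWithin (fun t => ∫ s in (0:ℝ)..t, φ s) (Set.Icc 0 h) t = φ t := by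
    intro t ht
    haveI : Fact (t ∈ Set.Icc (0:ℝ) h) := ⟨ht⟩
    exact derivWithin_integral_right (hInt t ht)
      (hφ.stronglyMeasurableAtFilter_nhdsWithin measurableSet_Icc t)
      (hφ t ht) (uniqueDiffOn_Icc hh t ht)
  have hbound : ∀ t ∈ Set.Icc (0:ℝ) h, |∫ s in (0:ℝ)..t, φ s| ≤ h * C := by
    intro t ht
    calc |∫ s in (0:ℝ)..t, φ s| ≤ C * |t - 0| := by
          rw [← Real.norm_eq_abs]
          apply intervalIntegral.norm_integral_le_of_norm_le_const
          intro x hx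
          rw [Set.uIoc_of_le ht.1] at hx
          simpa using hC x ⟨hx.1.le, hx.2.trans ht.2⟩
      _ ≤ h * C := by
          rw [sub_zero, abs_of_nonneg ht.1, mul_comm]
          exact mul_le_mul_of_nonneg_right ht.2 hC0
  have h1 : supN 0 h (fun t => ∫ s in (0:ℝ)..t, φ s) ≤ h * C :=
    supN_le (mul_nonneg hh.le hC0) hbound
  have h2 : supN 0 h (derivWithin (fun t => ∫ s in (0:ℝ)..t, φ s) (Set.Icc 0 h)) ≤ C :=
    supN_le hC0 fun t ht => by rw [hderiv t ht]; exact hC t ht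
  calc nC1 0 h (fun t => ∫ s in (0:ℝ)..t, φ s) ≤ h * C + C := add_le_add h1 h2
    _ = (h + 1) * C := by ring

lemma p12_eq_fderiv {g : ℝ → ℝ → ℝ} {U : Set (ℝ × ℝ)} (hU : IsOpen U)
    (hg : ContDiffOn ℝ 1 (fun p : ℝ × ℝ => g p.1 p.2) U) {x v : ℝ} (hp : (x, v) ∈ U) :
    p1 g x v = fderiv ℝ (fun p : ℝ × ℝ => g p.1 p.2) (x, v) (1, 0) ∧
    p2 g x v = fderiv ℝ (fun p : ℝ × ℝ => g p.1 p.2) (x, v) (0, 1) := by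
  have hd : DifferentiableAt ℝ (fun p : ℝ × ℝ => g p.1 p.2) (x, v) :=
    (hg.contDiffAt (hU.mem_nhds hp)).differentiableAt one_ne_zero
  have hF := hd.hasFDerivAt
  constructor
  · have hi : HasDerivAt (fun x' : ℝ => (x', v)) ((1:ℝ), (0:ℝ)) x :=
      (hasDerivAt_id x).prodMk (hasDerivAt_const x v)
    exact (hF.comp_hasDerivAt x hi).deriv.symm ▸ rfl
  · have hi : HasDerivAt (fun v' : ℝ => (x, v')) ((0:ℝ), (1:ℝ)) v :=
      (hasDerivAt_const v x).prodMk (hasDerivAt_id v)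
    exact (hF.comp_hasDerivAt v hi).deriv.symm ▸ rfl

lemma fderiv_apply_p12 {g : ℝ → ℝ → ℝ} {U : Set (ℝ × ℝ)} (hU : IsOpen U)
    (hg : ContDiffOn ℝ 1 (fun p : ℝ × ℝ => g p.1 p.2) U) {x v : ℝ} (hp : (x, v) ∈ U)
    (w : ℝ × ℝ) :
    fderiv ℝ (fun p : ℝ × ℝ => g p.1 p.2) (x, v) w = p1 g x v * w.1 + p2 g x v * w.2 := by
  obtain ⟨h1, h2⟩ := p12_eq_fderiv hU hg hp
  have hw : w = w.1 • ((1:ℝ), (0:ℝ)) + w.2 • ((0:ℝ), (1:ℝ)) := by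
    ext <;> simp
  rw [h1, h2]
  conv_lhs => rw [hw]
  rw [map_add, _root_.map_smul, _root_.map_smul]
  simp [smul_eq_mul]
  ring

lemma neg_mapsTo {h : ℝ} : ∀ s ∈ Set.Icc (0:ℝ) h, -s ∈ Set.Icc (-h) 0 := by
  intro s hs; exact ⟨by linarith [hs.2], by linarith [hs.1]⟩

lemma domFacts {J I : Set ℝ} (hIo : IsOpen I) (hJo : IsOpen J) {g : ℝ → ℝ → ℝ}
    (hg : ContDiffOn ℝ 1 (fun p : ℝ × ℝ => g p.1 p.2) (J ×ˢ I)) {h : ℝ}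
    {ψ y : ℝ → ℝ} (hd : DomG J I h ψ y) :
    (∀ s ∈ Set.Icc (0:ℝ) h, (y s, ψ (-s)) ∈ J ×ˢ I) ∧
    ContinuousOn (fun s => (y s, ψ (-s))) (Set.Icc 0 h) ∧
    ContinuousOn (fun s => g (y s) (ψ (-s))) (Set.Icc 0 h) ∧
    ContinuousOn (fun s => p1 g (y s) (ψ (-s))) (Set.Icc 0 h) ∧
    ContinuousOn (fun s => p2 g (y s) (ψ (-s))) (Set.Icc 0 h) := by
  obtain ⟨hψ, hψI, hy, hyJ⟩ := hd
  have hUo : IsOpen (J ×ˢ I) := hJo.prod hIo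
  have hmem : ∀ s ∈ Set.Icc (0:ℝ) h, (y s, ψ (-s)) ∈ J ×ˢ I := fun s hs =>
    ⟨hyJ s hs, hψI (-s) (neg_mapsTo s hs)⟩
  have hψn : ContinuousOn (fun s => ψ (-s)) (Set.Icc (0:ℝ) h) :=
    hψ.1.comp continuous_neg.continuousOn neg_mapsTo
  have hpair : ContinuousOn (fun s => (y s, ψ (-s))) (Set.Icc 0 h) := hy.1.prodMk hψn
  have hDG : ContinuousOn (fderiv ℝ (fun p : ℝ × ℝ => g p.1 p.2)) (J ×ˢ I) := by
    have := hg.continuousOn_fderiv_of_isOpen hUo le_rfl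
    exact this
  have hDGc : ContinuousOn (fun s => fderiv ℝ (fun p : ℝ × ℝ => g p.1 p.2) (y s, ψ (-s)))
      (Set.Icc 0 h) := hDG.comp hpair hmem
  refine ⟨hmem, hpair, hg.continuousOn.comp hpair hmem, ?_, ?_⟩
  · exact (hDGc.clm_apply continuousOn_const).congr fun s hs =>
      (p12_eq_fderiv hUo hg (hmem s hs)).1
  · exact (hDGc.clm_apply continuousOn_const).congr fun s hs =>
      (p12_eq_fderiv hUo hg (hmem s hs)).2

lemma keyLemma {J I : Set ℝ} (hIo : IsOpen I) (hJo : IsOpen J) {g : ℝ → ℝ → ℝ}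
    (hg : ContDiffOn ℝ 1 (fun p : ℝ × ℝ => g p.1 p.2) (J ×ˢ I)) {h : ℝ} (hh : 0 < h)
    {ψ y : ℝ → ℝ} (hd : DomG J I h ψ y) {ε'' : ℝ} (hε'' : 0 < ε'') :
    ∃ δ > 0, ∀ s ∈ Set.Icc (0:ℝ) h, ∀ p' : ℝ × ℝ, dist p' (y s, ψ (-s)) ≤ δ →
      p' ∈ J ×ˢ I ∧
      ‖fderiv ℝ (fun p : ℝ × ℝ => g p.1 p.2) p' -
        fderiv ℝ (fun p : ℝ × ℝ => g p.1 p.2) (y s, ψ (-s))‖ ≤ ε'' := by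
  obtain ⟨hmem, hpair, -, -, -⟩ := domFacts hIo hJo hg hd
  have hUo : IsOpen (J ×ˢ I) := hJo.prod hIo
  set Kset := (fun s => (y s, ψ (-s))) '' Set.Icc 0 h with hKset
  have hKc : IsCompact Kset := isCompact_Icc.image_of_continuousOn hpair
  have hKU : Kset ⊆ J ×ˢ I := by rintro q ⟨s, hs, rfl⟩; exact hmem s hs
  obtain ⟨r, hr, hrsub⟩ := hKc.exists_thickening_subset_open hUo hKU
  set N := Metric.cthickening (r/2) Kset with hN
  have hNc : IsCompact N := hKc.cthickening
  have hNU : N ⊆ J ×ˢ I :=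
    (Metric.cthickening_subset_thickening' hr (half_lt_self hr) Kset).trans hrsub
  have hDG : ContinuousOn (fderiv ℝ (fun p : ℝ × ℝ => g p.1 p.2)) (J ×ˢ I) :=
    hg.continuousOn_fderiv_of_isOpen hUo le_rfl
  have hUC := hNc.uniformContinuousOn_of_continuous (hDG.mono hNU)
  rw [Metric.uniformContinuousOn_iff] at hUC
  obtain ⟨ρ, hρ, hρ'⟩ := hUC ε'' hε''
  refine ⟨min (ρ/2) (r/2), lt_min (by linarith) (by linarith), ?_⟩
  intro s hs p' hdist
  have hpK : (y s, ψ (-s)) ∈ Kset := ⟨s, hs, rfl⟩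
  have hpN : (y s, ψ (-s)) ∈ N := Metric.self_subset_cthickening Kset hpK
  have hp'N : p' ∈ N := Metric.mem_cthickening_of_dist_le p' _ (r/2) Kset hpK
    (hdist.trans (min_le_right _ _))
  refine ⟨hNU hp'N, ?_⟩
  have := hρ' p' hp'N _ hpN (lt_of_le_of_lt (hdist.trans (min_le_left _ _)) (by linarith))
  rw [dist_eq_norm] at this
  exact this.le

lemma part1 {I J : Set ℝ} (hIo : IsOpen I) (hJo : IsOpen J) {g : ℝ → ℝ → ℝ}
    (hg : ContDiffOn ℝ 1 (fun p : ℝ × ℝ => g p.1 p.2) (J ×ˢ I)) {h : ℝ} (hh : 0 < h) :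
    ∀ ψ y : ℝ → ℝ, DomG J I h ψ y →
      ∀ ε' > 0, ∃ δ > 0, ∀ ψ' y' : ℝ → ℝ, DomG J I h ψ' y' →
        nC1 (-h) 0 (ψ' - ψ) ≤ δ → nC1 0 h (y' - y) ≤ δ →
        nC1 0 h (Gmap g ψ' y' - Gmap g ψ y - D1G g ψ y (ψ' - ψ) - D2G g ψ y (y' - y)) ≤
          ε' * (nC1 (-h) 0 (ψ' - ψ) + nC1 0 h (y' - y)) := by
  intro ψ y hdom ε' hε'
  have hUo : IsOpen (J ×ˢ I) := hJo.prod hIo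
  set G2 := fun p : ℝ × ℝ => g p.1 p.2 with hG2
  set DG := fderiv ℝ G2 with hDG
  have hh1 : (0:ℝ) < h + 1 := by linarith
  set ε'' := ε' / (h + 1) with hε''def
  have hε'' : 0 < ε'' := div_pos hε' hh1
  obtain ⟨δ, hδ, hkey⟩ := keyLemma hIo hJo hg hh hdom hε''
  obtain ⟨hmem, hpair, hgc, hp1c, hp2c⟩ := domFacts hIo hJo hg hdom
  refine ⟨δ, hδ, ?_⟩
  intro ψ' y' hdom' hχd hud
  obtain ⟨hmem', hpair', hgc', hp1c', hp2c'⟩ := domFacts hIo hJo hg hdom'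
  have hnh : -h < 0 := by linarith
  have hχ1 : C1on (-h) 0 (ψ' - ψ) := C1on.sub hnh hdom'.1 hdom.1
  have hu1 : C1on 0 h (y' - y) := C1on.sub hh hdom'.2.2.1 hdom.2.2.1
  set S := nC1 (-h) 0 (ψ' - ψ) + nC1 0 h (y' - y) with hS
  have hS0 : 0 ≤ S := add_nonneg nC1_nonneg nC1_nonneg
  -- pointwise distance bound
  have hdist : ∀ s ∈ Set.Icc (0:ℝ) h, dist ((y' s, ψ' (-s)) : ℝ × ℝ) (y s, ψ (-s)) ≤ δ := by
    intro s hs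
    rw [Prod.dist_eq]
    refine max_le ?_ ?_
    · rw [Real.dist_eq]
      exact le_trans (abs_le_nC1 (f := y' - y) hu1 hs) hud
    · rw [Real.dist_eq]
      exact le_trans (abs_le_nC1 (f := ψ' - ψ) hχ1 (neg_mapsTo s hs)) hχd
  -- pointwise remainder bound
  set Φ := fun s => g (y' s) (ψ' (-s)) - g (y s) (ψ (-s))
      - p2 g (y s) (ψ (-s)) * (ψ' - ψ) (-s) - p1 g (y s) (ψ (-s)) * (y' - y) s with hΦ
  have hΦbound : ∀ s ∈ Set.Icc (0:ℝ) h, |Φ s| ≤ ε'' * S := by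
    intro s hs
    set p : ℝ × ℝ := (y s, ψ (-s)) with hp
    set p' : ℝ × ℝ := (y' s, ψ' (-s)) with hp'
    have hsegsub : segment ℝ p p' ⊆ Metric.closedBall p (dist p' p) :=
      (convex_closedBall p (dist p' p)).segment_subset (Metric.mem_closedBall_self dist_nonneg)
        (Metric.mem_closedBall.mpr le_rfl)
    have hqfact : ∀ q ∈ segment ℝ p p', q ∈ J ×ˢ I ∧ ‖DG q - DG p‖ ≤ ε'' := by
      intro q hq
      have : dist q p ≤ δ := le_trans (Metric.mem_closedBall.mp (hsegsub hq)) (hdist s hs)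
      exact hkey s hs q this
    have hmvt : ‖G2 p' - G2 p - (DG p) (p' - p)‖ ≤ ε'' * ‖p' - p‖ := by
      apply Convex.norm_image_sub_le_of_norm_hasFDerivWithin_le' (f' := DG)
        (fun q hq => (((hg.contDiffAt (hUo.mem_nhds (hqfact q hq).1)).differentiableAt
          one_ne_zero).hasFDerivAt).hasFDerivWithinAt)
        (fun q hq => (hqfact q hq).2) (convex_segment p p')
        (left_mem_segment ℝ p p') (right_mem_segment ℝ p p')
    have happ : (DG p) (p' - p) = p1 g (y s) (ψ (-s)) * (y' s - y s)
        + p2 g (y s) (ψ (-s)) * (ψ' (-s) - ψ (-s)) := by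
      have := fderiv_apply_p12 hUo hg (hmem s hs) (p' - p)
      simpa using this
    have hΦeq : Φ s = G2 p' - G2 p - (DG p) (p' - p) := by
      rw [happ]; simp only [hΦ, hG2, Pi.sub_apply]; ring
    have hnorm : ‖p' - p‖ ≤ S := by
      rw [Prod.norm_def]
      refine max_le ?_ ?_
      · have := abs_le_nC1 (f := y' - y) hu1 hs
        simp only [Real.norm_eq_abs]
        refine le_trans ?_ (le_add_of_nonneg_left nC1_nonneg)
        simpa using this
      · have := abs_le_nC1 (f := ψ' - ψ) hχ1 (neg_mapsTo s hs)
        simp only [Real.norm_eq_abs]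
        refine le_trans ?_ (le_add_of_nonneg_right nC1_nonneg)
        simpa using this
    calc |Φ s| = ‖G2 p' - G2 p - (DG p) (p' - p)‖ := by rw [hΦeq, Real.norm_eq_abs]
      _ ≤ ε'' * ‖p' - p‖ := hmvt
      _ ≤ ε'' * S := mul_le_mul_of_nonneg_left hnorm hε''.le
  -- continuity of Φ
  have hχn : ContinuousOn (fun s => (ψ' - ψ) (-s)) (Set.Icc (0:ℝ) h) :=
    hχ1.1.comp continuous_neg.continuousOn neg_mapsTo
  have hun : ContinuousOn (fun s => (y' - y) s) (Set.Icc (0:ℝ) h) := hu1.1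
  have hΦc : ContinuousOn Φ (Set.Icc 0 h) :=
    ((hgc'.sub hgc).sub (hp2c.mul hχn)).sub (hp1c.mul hun)
  -- interval integrability helper
  have hII : ∀ {f : ℝ → ℝ}, ContinuousOn f (Set.Icc 0 h) → ∀ t ∈ Set.Icc (0:ℝ) h,
      IntervalIntegrable f volume 0 t := fun {f} hf t ht =>
    (hf.mono (by rw [Set.uIcc_of_le ht.1]; exact Set.Icc_subset_Icc le_rfl ht.2)).intervalIntegrable
  -- the function equals the integral of Φ
  have heq : ∀ t ∈ Set.Icc (0:ℝ) h,
      (Gmap g ψ' y' - Gmap g ψ y - D1G g ψ y (ψ' - ψ) - D2G g ψ y (y' - y)) t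
        = ∫ s in (0:ℝ)..t, Φ s := by
    intro t ht
    have hIA := hII hgc' t ht
    have hIB := hII hgc t ht
    have hIC := hII (hp2c.mul hχn) t ht
    have hID := hII (hp1c.mul hun) t ht
    have e1 : ∫ s in (0:ℝ)..t, Φ s
        = (∫ s in (0:ℝ)..t, g (y' s) (ψ' (-s))) - (∫ s in (0:ℝ)..t, g (y s) (ψ (-s)))
          - (∫ s in (0:ℝ)..t, p2 g (y s) (ψ (-s)) * (ψ' - ψ) (-s))
          - (∫ s in (0:ℝ)..t, p1 g (y s) (ψ (-s)) * (y' - y) s) := by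
      rw [hΦ]
      rw [intervalIntegral.integral_sub
          (f := fun s => g (y' s) (ψ' (-s)) - g (y s) (ψ (-s)) - p2 g (y s) (ψ (-s)) * (ψ' - ψ) (-s))
          (g := fun s => p1 g (y s) (ψ (-s)) * (y' - y) s) ((hIA.sub hIB).sub hIC) hID,
        intervalIntegral.integral_sub (g := fun s => p2 g (y s) (ψ (-s)) * (ψ' - ψ) (-s))
          (hIA.sub hIB) hIC,
        intervalIntegral.integral_sub hIA hIB]
    simp only [Pi.sub_apply] at e1
    simp only [Pi.sub_apply, Gmap, D1G, D2G]
    rw [e1]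
    ring
  calc nC1 0 h (Gmap g ψ' y' - Gmap g ψ y - D1G g ψ y (ψ' - ψ) - D2G g ψ y (y' - y))
      = nC1 0 h (fun t => ∫ s in (0:ℝ)..t, Φ s) := nC1_congr heq
    _ ≤ (h + 1) * (ε'' * S) := nC1_integral_le hh hΦc hΦbound
    _ = ε' * S := by rw [hε''def]; field_simp

lemma part2 {I J : Set ℝ} (hIo : IsOpen I) (hJo : IsOpen J) {g : ℝ → ℝ → ℝ}
    (hg : ContDiffOn ℝ 1 (fun p : ℝ × ℝ => g p.1 p.2) (J ×ˢ I)) {h : ℝ} (hh : 0 < h) :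
    ∀ ψ y : ℝ → ℝ, DomG J I h ψ y →
      ∀ ε' > 0, ∃ δ > 0, ∀ ψ' y' : ℝ → ℝ, DomG J I h ψ' y' →
        nC1 (-h) 0 (ψ' - ψ) ≤ δ → nC1 0 h (y' - y) ≤ δ →
        ∀ χ u : ℝ → ℝ, C1on (-h) 0 χ → C1on 0 h u →
          nC1 0 h (D1G g ψ' y' χ - D1G g ψ y χ) +
            nC1 0 h (D2G g ψ' y' u - D2G g ψ y u) ≤
            ε' * (nC1 (-h) 0 χ + nC1 0 h u) := by
  intro ψ y hdom ε' hε'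
  have hUo : IsOpen (J ×ˢ I) := hJo.prod hIo
  set DG := fderiv ℝ (fun p : ℝ × ℝ => g p.1 p.2) with hDGdef
  have hh1 : (0:ℝ) < h + 1 := by linarith
  set ε'' := ε' / (h + 1) with hε''def
  have hε'' : 0 < ε'' := div_pos hε' hh1
  obtain ⟨δ, hδ, hkey⟩ := keyLemma hIo hJo hg hh hdom hε''
  obtain ⟨hmem, hpair, hgc, hp1c, hp2c⟩ := domFacts hIo hJo hg hdom
  refine ⟨δ, hδ, ?_⟩
  intro ψ' y' hdom' hχd hud χ u hχ1 hu1
  obtain ⟨hmem', hpair', hgc', hp1c', hp2c'⟩ := domFacts hIo hJo hg hdom'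
  have hnh : -h < 0 := by linarith
  have hdχ1 : C1on (-h) 0 (ψ' - ψ) := C1on.sub hnh hdom'.1 hdom.1
  have hdu1 : C1on 0 h (y' - y) := C1on.sub hh hdom'.2.2.1 hdom.2.2.1
  have hdist : ∀ s ∈ Set.Icc (0:ℝ) h, dist ((y' s, ψ' (-s)) : ℝ × ℝ) (y s, ψ (-s)) ≤ δ := by
    intro s hs
    rw [Prod.dist_eq]
    refine max_le ?_ ?_
    · rw [Real.dist_eq]
      exact le_trans (abs_le_nC1 (f := y' - y) hdu1 hs) hud
    · rw [Real.dist_eq]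
      exact le_trans (abs_le_nC1 (f := ψ' - ψ) hdχ1 (neg_mapsTo s hs)) hχd
  -- uniform closeness of partial derivatives
  have hpclose : ∀ s ∈ Set.Icc (0:ℝ) h,
      |p1 g (y' s) (ψ' (-s)) - p1 g (y s) (ψ (-s))| ≤ ε'' ∧
      |p2 g (y' s) (ψ' (-s)) - p2 g (y s) (ψ (-s))| ≤ ε'' := by
    intro s hs
    obtain ⟨hp'U, hDGle⟩ := hkey s hs _ (hdist s hs)
    have e1 := p12_eq_fderiv hUo hg hp'U
    have e2 := p12_eq_fderiv hUo hg (hmem s hs)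
    constructor
    · rw [e1.1, e2.1]
      have : fderiv ℝ (fun p : ℝ × ℝ => g p.1 p.2) (y' s, ψ' (-s)) ((1:ℝ), (0:ℝ))
            - fderiv ℝ (fun p : ℝ × ℝ => g p.1 p.2) (y s, ψ (-s)) ((1:ℝ), (0:ℝ))
          = (fderiv ℝ (fun p : ℝ × ℝ => g p.1 p.2) (y' s, ψ' (-s))
            - fderiv ℝ (fun p : ℝ × ℝ => g p.1 p.2) (y s, ψ (-s))) ((1:ℝ), (0:ℝ)) := by
        simp
      rw [← Real.norm_eq_abs, this]
      calc ‖_‖ ≤ ‖fderiv ℝ (fun p : ℝ × ℝ => g p.1 p.2) (y' s, ψ' (-s))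
            - fderiv ℝ (fun p : ℝ × ℝ => g p.1 p.2) (y s, ψ (-s))‖ * ‖((1:ℝ), (0:ℝ))‖ :=
          ContinuousLinearMap.le_opNorm _ _
        _ ≤ ε'' * 1 := by
            apply mul_le_mul hDGle _ (norm_nonneg _) hε''.le
            rw [Prod.norm_def]; simp
        _ = ε'' := mul_one _
    · rw [e1.2, e2.2]
      have : fderiv ℝ (fun p : ℝ × ℝ => g p.1 p.2) (y' s, ψ' (-s)) ((0:ℝ), (1:ℝ))
            - fderiv ℝ (fun p : ℝ × ℝ => g p.1 p.2) (y s, ψ (-s)) ((0:ℝ), (1:ℝ))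
          = (fderiv ℝ (fun p : ℝ × ℝ => g p.1 p.2) (y' s, ψ' (-s))
            - fderiv ℝ (fun p : ℝ × ℝ => g p.1 p.2) (y s, ψ (-s))) ((0:ℝ), (1:ℝ)) := by
        simp
      rw [← Real.norm_eq_abs, this]
      calc ‖_‖ ≤ ‖fderiv ℝ (fun p : ℝ × ℝ => g p.1 p.2) (y' s, ψ' (-s))
            - fderiv ℝ (fun p : ℝ × ℝ => g p.1 p.2) (y s, ψ (-s))‖ * ‖((0:ℝ), (1:ℝ))‖ :=
          ContinuousLinearMap.le_opNorm _ _
        _ ≤ ε'' * 1 := by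
            apply mul_le_mul hDGle _ (norm_nonneg _) hε''.le
            rw [Prod.norm_def]; simp
        _ = ε'' := mul_one _
  have hII : ∀ {f : ℝ → ℝ}, ContinuousOn f (Set.Icc 0 h) → ∀ t ∈ Set.Icc (0:ℝ) h,
      IntervalIntegrable f volume 0 t := fun {f} hf t ht =>
    (hf.mono (by rw [Set.uIcc_of_le ht.1]; exact Set.Icc_subset_Icc le_rfl ht.2)).intervalIntegrable
  have hχn : ContinuousOn (fun s => χ (-s)) (Set.Icc (0:ℝ) h) :=
    hχ1.1.comp continuous_neg.continuousOn neg_mapsTo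
  -- D1 piece
  set Φ1 := fun s => p2 g (y' s) (ψ' (-s)) * χ (-s) - p2 g (y s) (ψ (-s)) * χ (-s) with hΦ1
  have hΦ1c : ContinuousOn Φ1 (Set.Icc 0 h) := (hp2c'.mul hχn).sub (hp2c.mul hχn)
  have hΦ1b : ∀ s ∈ Set.Icc (0:ℝ) h, |Φ1 s| ≤ ε'' * nC1 (-h) 0 χ := by
    intro s hs
    have : Φ1 s = (p2 g (y' s) (ψ' (-s)) - p2 g (y s) (ψ (-s))) * χ (-s) := by rw [hΦ1]; ring
    rw [this, abs_mul]
    exact mul_le_mul (hpclose s hs).2 (abs_le_nC1 hχ1 (neg_mapsTo s hs)) (abs_nonneg _) hε''.le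
  have heq1 : ∀ t ∈ Set.Icc (0:ℝ) h,
      (D1G g ψ' y' χ - D1G g ψ y χ) t = ∫ s in (0:ℝ)..t, Φ1 s := by
    intro t ht
    simp only [Pi.sub_apply, D1G, hΦ1]
    rw [intervalIntegral.integral_sub (f := fun s => p2 g (y' s) (ψ' (-s)) * χ (-s))
      (g := fun s => p2 g (y s) (ψ (-s)) * χ (-s)) (hII (hp2c'.mul hχn) t ht) (hII (hp2c.mul hχn) t ht)]
  have hbd1 : nC1 0 h (D1G g ψ' y' χ - D1G g ψ y χ) ≤ (h + 1) * (ε'' * nC1 (-h) 0 χ) := by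
    rw [nC1_congr heq1]
    exact nC1_integral_le hh hΦ1c hΦ1b
  -- D2 piece
  set Φ2 := fun s => p1 g (y' s) (ψ' (-s)) * u s - p1 g (y s) (ψ (-s)) * u s with hΦ2
  have hΦ2c : ContinuousOn Φ2 (Set.Icc 0 h) := (hp1c'.mul hu1.1).sub (hp1c.mul hu1.1)
  have hΦ2b : ∀ s ∈ Set.Icc (0:ℝ) h, |Φ2 s| ≤ ε'' * nC1 0 h u := by
    intro s hs
    have : Φ2 s = (p1 g (y' s) (ψ' (-s)) - p1 g (y s) (ψ (-s))) * u s := by rw [hΦ2]; ring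
    rw [this, abs_mul]
    exact mul_le_mul (hpclose s hs).1 (abs_le_nC1 hu1 hs) (abs_nonneg _) hε''.le
  have heq2 : ∀ t ∈ Set.Icc (0:ℝ) h,
      (D2G g ψ' y' u - D2G g ψ y u) t = ∫ s in (0:ℝ)..t, Φ2 s := by
    intro t ht
    simp only [Pi.sub_apply, D2G, hΦ2]
    rw [intervalIntegral.integral_sub (f := fun s => p1 g (y' s) (ψ' (-s)) * u s)
      (g := fun s => p1 g (y s) (ψ (-s)) * u s) (hII (hp1c'.mul hu1.1) t ht) (hII (hp1c.mul hu1.1) t ht)]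
    ring
  have hbd2 : nC1 0 h (D2G g ψ' y' u - D2G g ψ y u) ≤ (h + 1) * (ε'' * nC1 0 h u) := by
    rw [nC1_congr heq2]
    exact nC1_integral_le hh hΦ2c hΦ2b
  calc nC1 0 h (D1G g ψ' y' χ - D1G g ψ y χ) + nC1 0 h (D2G g ψ' y' u - D2G g ψ y u)
      ≤ (h + 1) * (ε'' * nC1 (-h) 0 χ) + (h + 1) * (ε'' * nC1 0 h u) := add_le_add hbd1 hbd2
    _ = ε' * (nC1 (-h) 0 χ + nC1 0 h u) := by rw [hε''def]; field_simp

end Helpers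

/-- under hypothesis (G) with h = b/K, the map G is continuously Fréchet
differentiable with the stated partial derivatives. -/
theorem stmt11 (I J : Set ℝ) (hIo : IsOpen I) (hIne : I.Nonempty)
    (hJo : IsOpen J) (hJc : J.OrdConnected)
    (x₁ x₂ b K ε : ℝ) (hb : 0 < b) (hK : 0 < K) (hε : 0 < ε)
    (g : ℝ → ℝ → ℝ)
    (hsub : Metric.closedBall x₂ b ⊆ J)
    (hg : ContDiffOn ℝ 1 (fun p : ℝ × ℝ => g p.1 p.2) (J ×ˢ I))
    (hg2 : ∀ x ∈ Metric.closedBall x₂ b, ∀ y ∈ I, |p1 g x y| < K / b)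
    (hg3 : ∀ x ∈ Metric.closedBall x₂ b, ∀ y ∈ I, ε ≤ g x y ∧ g x y ≤ K)
    (hx : x₂ - x₁ ∈ Set.Ioo 0 ((b / K) * ε)) :
    (∀ ψ y : ℝ → ℝ, DomG J I (b/K) ψ y →
      ∀ ε' > 0, ∃ δ > 0, ∀ ψ' y' : ℝ → ℝ, DomG J I (b/K) ψ' y' →
        nC1 (-(b/K)) 0 (ψ' - ψ) ≤ δ → nC1 0 (b/K) (y' - y) ≤ δ →
        nC1 0 (b/K) (Gmap g ψ' y' - Gmap g ψ y - D1G g ψ y (ψ' - ψ) - D2G g ψ y (y' - y)) ≤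
          ε' * (nC1 (-(b/K)) 0 (ψ' - ψ) + nC1 0 (b/K) (y' - y))) ∧
    (∀ ψ y : ℝ → ℝ, DomG J I (b/K) ψ y →
      ∀ ε' > 0, ∃ δ > 0, ∀ ψ' y' : ℝ → ℝ, DomG J I (b/K) ψ' y' →
        nC1 (-(b/K)) 0 (ψ' - ψ) ≤ δ → nC1 0 (b/K) (y' - y) ≤ δ →
        ∀ χ u : ℝ → ℝ, C1on (-(b/K)) 0 χ → C1on 0 (b/K) u →
          nC1 0 (b/K) (D1G g ψ' y' χ - D1G g ψ y χ) +
            nC1 0 (b/K) (D2G g ψ' y' u - D2G g ψ y u) ≤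
            ε' * (nC1 (-(b/K)) 0 χ + nC1 0 (b/K) u)) :=
  ⟨part1 hIo hJo hg (div_pos hb hK), part2 hIo hJo hg (div_pos hb hK)⟩
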